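/- arXiv:2207.13562 — 5 statements merged into one kernel-verified Lean document; each statement's English description precedes it below -/
import Mathlib

section
/- Let F be a field of characteristic different from 2, T a finite group, σ : T × T → Fˣ a 2-cocycle, and let A be a twisted group algebra F^σT with basis (X_u)_{u∈T}. Suppose τ : T → T is an anti-automorphism with τ∘τ = id and μ : T → Fˣ satisfies σ(u,v) = μ(u)·μ(v)·μ(uv)⁻¹·σ(τ(v),τ(u)) for all u,v ∈ T and μ(u·τ(u)) = 1 for all u ∈ T. Then the F-linear map ι : A → A determined by ι(X_u) = μ(u) • X_{τ(u)} satisfies ι(x·y) = ι(y)·ι(x) for all x,y ∈ A and ι(ι(x)) = x for all x ∈ A; in particular, ι is an involution of A with ι(X_u) ∈ F • X_{τ(u)} for all u ∈ T. -/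
/-- If (σ,τ) is a compatible pair (witnessed by μ), then the F-linear map ι on
the twisted group algebra F^σT determined by ι(X_u) = μ(u) • X_{τ(u)} is an
involution, and it sends X_u into F • X_{τ(u)}. -/
theorem homogeneous_involution_exists {F : Type*} [Field F]
    (hchar : (2 : F) ≠ 0)
    {T : Type*} [Group T] [Fintype T]
    {A : Type*} [Ring A] [Algebra F A]
    (σ : T → T → Fˣ)
    (hσ : ∀ u v w : T, σ u v * σ (u * v) w = σ u (v * w) * σ v w)
    (X : Module.Basis T F A)
    (hX : ∀ u v : T, X u * X v = (σ u v : F) • X (u * v))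
    (τ : T → T) (hτanti : ∀ u v : T, τ (u * v) = τ v * τ u)
    (hτ2 : τ ∘ τ = id)
    (μ : T → Fˣ)
    (hco : ∀ u v : T, σ u v = μ u * μ v * (μ (u * v))⁻¹ * σ (τ v) (τ u))
    (hμ1 : ∀ u : T, μ (u * τ u) = 1)
    (ι : A →ₗ[F] A)
    (hι : ∀ u : T, ι (X u) = (μ u : F) • X (τ u)) :
    (∀ x y : A, ι (x * y) = ι y * ι x) ∧ (∀ x : A, ι (ι x) = x) ∧
      (∀ u : T, ∃ c : F, ι (X u) = c • X (τ u)) := by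
  have hττ : ∀ u : T, τ (τ u) = u := fun u => congrFun hτ2 u
  -- key scalar identity
  have hkey : ∀ u v : T, ι (X u * X v) = ι (X v) * ι (X u) := by
    intro u v
    have hF : (σ u v : F) * μ (u * v) = (μ v : F) * μ u * σ (τ v) (τ u) := by
      have h := congrArg (Units.val) (hco u v)
      push_cast at h
      rw [h]
      field_simp
    rw [hX, map_smul, hι, hτanti, hι, hι, smul_mul_smul_comm, hX, smul_smul, smul_smul]
    congr 1
  have step1 : ∀ u : T, ∀ y : A, ι (X u * y) = ι y * ι (X u) := by
    intro u
    have h : (ι.comp (LinearMap.mulLeft F (X u))) =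
        (LinearMap.mulRight F (ι (X u))).comp ι :=
      X.ext fun v => hkey u v
    exact fun y => LinearMap.congr_fun h y
  have anti : ∀ x y : A, ι (x * y) = ι y * ι x := by
    intro x y
    have h : (ι.comp (LinearMap.mulRight F y)) =
        (LinearMap.mulLeft F (ι y)).comp ι :=
      X.ext fun u => step1 u y
    exact LinearMap.congr_fun h x
  have hmu : ∀ u : T, (μ u : F) * (μ (τ u) : F) = 1 := by
    intro u
    have h := hco u (τ u)
    rw [hμ1 u, hττ u, inv_one, mul_one] at h
    have h2 : μ u * μ (τ u) = 1 := by
      have := mul_right_cancel ((one_mul (σ u (τ u))).trans h)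
      exact this.symm
    rw [← Units.val_mul, h2, Units.val_one]
  have invol : ∀ x : A, ι (ι x) = x := by
    intro x
    have h : (ι.comp ι) = LinearMap.id := by
      refine X.ext fun u => ?_
      simp only [LinearMap.comp_apply, LinearMap.id_apply, hι, map_smul, hττ, smul_smul,
        hmu u, one_smul]
    exact LinearMap.congr_fun h x
  exact ⟨anti, invol, fun u => ⟨(μ u : F), hι u⟩⟩
end

section
/- Let F be a field of characteristic different from 2, T a finite group, σ : T × T → Fˣ a 2-cocycle, A a twisted group algebra F^σT with basis (X_u)_{u∈T}, and τ : T → T a map. Suppose ι : A → A is an F-linear map with ι(x·y) = ι(y)·ι(x) and ι(ι(x)) = x for all x,y ∈ A, such that ι(X_u) lies in the F-span of X_{τ(u)} for every u ∈ T. Then τ is an anti-automorphism of T with τ∘τ = id, and there exists μ : T → Fˣ such that ι(X_u) = μ(u) • X_{τ(u)} for all u, σ(u,v) = μ(u)·μ(v)·μ(uv)⁻¹·σ(τ(v),τ(u)) for all u,v ∈ T, and μ(u·τ(u)) = 1 for all u ∈ T. -/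
/-- If ι is an F-linear involution of the twisted group algebra F^σT with
ι(X_u) ∈ F • X_{τ(u)} for all u, then τ is an anti-automorphism of T of order
dividing 2, and there is μ : T → Fˣ with ι(X_u) = μ(u) • X_{τ(u)}, witnessing
that the pair (σ,τ) is compatible. -/
theorem homogeneous_involution_necessity {F : Type*} [Field F]
    (hchar : (2 : F) ≠ 0)
    {T : Type*} [Group T] [Fintype T]
    {A : Type*} [Ring A] [Algebra F A]
    (σ : T → T → Fˣ)
    (hσ : ∀ u v w : T, σ u v * σ (u * v) w = σ u (v * w) * σ v w)
    (X : Module.Basis T F A)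
    (hX : ∀ u v : T, X u * X v = (σ u v : F) • X (u * v))
    (τ : T → T)
    (ι : A →ₗ[F] A)
    (hanti : ∀ x y : A, ι (x * y) = ι y * ι x)
    (hinv : ∀ x : A, ι (ι x) = x)
    (hhom : ∀ u : T, ∃ c : F, ι (X u) = c • X (τ u)) :
    Function.Bijective τ ∧ (∀ u v : T, τ (u * v) = τ v * τ u) ∧ τ ∘ τ = id ∧
      ∃ μ : T → Fˣ,
        (∀ u : T, ι (X u) = (μ u : F) • X (τ u)) ∧
        (∀ u v : T, σ u v = μ u * μ v * (μ (u * v))⁻¹ * σ (τ v) (τ u)) ∧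
        (∀ u : T, μ (u * τ u) = 1) := by
  classical
  choose c hc using hhom
  -- comparing coefficients in the basis
  have aux : ∀ {a b : F} {s t : T}, b ≠ 0 → a • X s = b • X t → s = t ∧ a = b := by
    intro a b s t hb h
    have h1 := congrArg X.repr h
    rw [map_smul, map_smul, X.repr_self, X.repr_self] at h1
    by_cases hst : s = t
    · subst hst
      have h2 := DFunLike.congr_fun h1 s
      simp [Finsupp.single_apply] at h2
      exact ⟨rfl, h2⟩
    · have h2 := DFunLike.congr_fun h1 t
      simp [Finsupp.single_apply, hst] at h2
      exact absurd h2.symm hb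
  have hcc : ∀ u, τ (τ u) = u ∧ c u * c (τ u) = 1 := by
    intro u
    have h : (c u * c (τ u)) • X (τ (τ u)) = (1 : F) • X u := by
      rw [one_smul, ← hinv (X u), hc, map_smul, hc, smul_smul]
    exact aux one_ne_zero h
  have hc0 : ∀ u, c u ≠ 0 := by
    intro u h
    have := (hcc u).2
    rw [h, zero_mul] at this
    exact zero_ne_one this
  have hkey : ∀ u v, τ (u * v) = τ v * τ u ∧
      (σ u v : F) * c (u * v) = c v * c u * (σ (τ v) (τ u) : F) := by
    intro u v
    have L : ι (X u * X v) = ((σ u v : F) * c (u * v)) • X (τ (u * v)) := by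
      rw [hX, map_smul, hc, smul_smul]
    have R : ι (X v) * ι (X u)
        = (c v * c u * (σ (τ v) (τ u) : F)) • X (τ v * τ u) := by
      rw [hc, hc, smul_mul_assoc, mul_smul_comm, hX, smul_smul, smul_smul]
    have hb : c v * c u * (σ (τ v) (τ u) : F) ≠ 0 :=
      mul_ne_zero (mul_ne_zero (hc0 v) (hc0 u)) (Units.ne_zero _)
    exact aux hb ((L.symm.trans (hanti (X u) (X v))).trans R)
  have hττ : Function.Involutive τ := fun u => (hcc u).1
  refine ⟨hττ.bijective, fun u v => (hkey u v).1, funext fun u => (hcc u).1, ?_⟩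
  refine ⟨fun u => Units.mk (c u) (c (τ u)) (hcc u).2
      (by rw [mul_comm]; exact (hcc u).2), fun u => hc u, ?_, ?_⟩
  · intro u v
    apply Units.ext
    show (σ u v : F) = c u * c v * c (τ (u * v)) * (σ (τ v) (τ u) : F)
    have h2 := (hkey u v).2
    have h3 := (hcc (u * v)).2
    linear_combination c (τ (u * v)) * h2 - (σ u v : F) * h3
  · intro u
    apply Units.ext
    show c (u * τ u) = 1
    have h2 := (hkey u (τ u)).2
    rw [(hcc u).1] at h2
    have hs : (σ u (τ u) : F) ≠ 0 := Units.ne_zero _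
    have h4 : (σ u (τ u) : F) * c (u * τ u) = (σ u (τ u) : F) * 1 := by
      rw [mul_one]; linear_combination h2 + (σ u (τ u) : F) * (hcc u).2
    exact mul_left_cancel₀ hs h4
end

section
/- Let F be a field of characteristic zero, T a finite group, σ : T × T → Fˣ a 2-cocycle, A a twisted group algebra F^σT with basis (X_u)_{u∈T}, τ : T → T an anti-automorphism with τ∘τ = id, μ : T → Fˣ, and ι : A → A the F-linear involution with ι(X_u) = μ(u) • X_{τ(u)}. For m ≥ 1 and s : Fin m → T, let P_s ⊆ A be the span of { X_{s(π(1))}·⋯·X_{s(π(m))} : π a permutation of Fin m } and let D_s ⊆ A be the span of { ι^{j(1)}(X_{s(π(1))})·⋯·ι^{j(m)}(X_{s(π(m))}) : π a permutation of Fin m, j : Fin m → {0,1} } (where ι^0 = id, ι^1 = ι). Then for every m: Σ_{s : Fin m → T} dim P_s ≤ Σ_{s : Fin m → T} dim D_s ≤ |T| · Σ_{s : Fin m → T} dim P_s. -/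
/-- The span of the permuted products of the X_{s i}. -/
def Pspan (F : Type*) [Field F] {T : Type*} [Group T]
    {A : Type*} [Ring A] [Algebra F A] (X : T → A)
    (m : ℕ) (s : Fin m → T) : Submodule F A :=
  Submodule.span F
    { a : A | ∃ π : Equiv.Perm (Fin m), a = (List.ofFn fun i => X (s (π i))).prod }

/-- The span of the permuted products of the ι^{j i}(X_{s i}). -/
def Dspan (F : Type*) [Field F] {T : Type*} [Group T]
    {A : Type*} [Ring A] [Algebra F A] (X : T → A) (ι : A →ₗ[F] A)
    (m : ℕ) (s : Fin m → T) : Submodule F A :=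
  Submodule.span F
    { a : A | ∃ (π : Equiv.Perm (Fin m)) (j : Fin m → Bool),
        a = (List.ofFn fun i => if j i then ι (X (s (π i))) else X (s (π i))).prod }

/-- A nonempty product of basis elements of a twisted group algebra is a unit
scalar times a basis element. -/
theorem prod_basis_eq_unit_smul {F : Type*} [Field F]
    {T : Type*} [Group T]
    {A : Type*} [Ring A] [Algebra F A]
    (σ : T → T → Fˣ)
    (X : Module.Basis T F A)
    (hX : ∀ u v : T, X u * X v = (σ u v : F) • X (u * v))
    (l : List T) (hl : l ≠ []) :
    ∃ c : Fˣ, (l.map (X ·)).prod = (c : F) • X l.prod := by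
  induction l with
  | nil => exact absurd rfl hl
  | cons u l ih =>
    rcases eq_or_ne l [] with rfl | hne
    · exact ⟨1, by simp⟩
    · obtain ⟨c, hc⟩ := ih hne
      refine ⟨σ u l.prod * c, ?_⟩
      rw [List.map_cons, List.prod_cons, hc, mul_smul_comm, hX, smul_smul, List.prod_cons]
      congr 1
      push_cast
      ring

/-- The graded codimension sequence and the graded-involution codimension
sequence of a twisted group algebra with a homogeneous involution satisfy
c_m^T ≤ c_m^{T,ι} ≤ |T| · c_m^T. -/
theorem graded_involution_codim_bounds {F : Type*} [Field F] [CharZero F]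
    {T : Type*} [Group T] [Fintype T]
    {A : Type*} [Ring A] [Algebra F A]
    (σ : T → T → Fˣ)
    (hσ : ∀ u v w : T, σ u v * σ (u * v) w = σ u (v * w) * σ v w)
    (X : Module.Basis T F A)
    (hX : ∀ u v : T, X u * X v = (σ u v : F) • X (u * v))
    (τ : T → T) (hτanti : ∀ u v : T, τ (u * v) = τ v * τ u)
    (hτ2 : τ ∘ τ = id)
    (μ : T → Fˣ)
    (ι : A →ₗ[F] A)
    (hι : ∀ u : T, ι (X u) = (μ u : F) • X (τ u))
    (hanti : ∀ x y : A, ι (x * y) = ι y * ι x)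
    (hinv : ∀ x : A, ι (ι x) = x)
    (m : ℕ) (hm : 1 ≤ m) :
    (∑ s : Fin m → T, Module.finrank F (Pspan F (X ·) m s)) ≤
        (∑ s : Fin m → T, Module.finrank F (Dspan F (X ·) ι m s)) ∧
      (∑ s : Fin m → T, Module.finrank F (Dspan F (X ·) ι m s)) ≤
        Fintype.card T * ∑ s : Fin m → T, Module.finrank F (Pspan F (X ·) m s) := by
  haveI : FiniteDimensional F A := Module.Finite.of_basis X
  constructor
  · -- P_s ⊆ D_s, so the dimensions are monotone.
    refine Finset.sum_le_sum fun s _ => ?_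
    refine Submodule.finrank_mono (Submodule.span_mono ?_)
    rintro a ⟨π, rfl⟩
    exact ⟨π, fun _ => false, by simp⟩
  · -- dim D_s ≤ |T| ≤ |T| · dim P_s since dim P_s ≥ 1.
    rw [Finset.mul_sum]
    refine Finset.sum_le_sum fun s _ => ?_
    have h2 : Module.finrank F (Dspan F (X ·) ι m s) ≤ Fintype.card T := by
      calc Module.finrank F (Dspan F (X ·) ι m s) ≤ Module.finrank F A :=
            Submodule.finrank_le _
        _ = Fintype.card T := (Module.finrank_eq_card_basis X)
    have h1 : 1 ≤ Module.finrank F (Pspan F (X ·) m s) := by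
      have hne : List.ofFn s ≠ [] := by
        simp [List.ofFn_eq_nil_iff]
        omega
      obtain ⟨c, hc⟩ := prod_basis_eq_unit_smul σ X hX (List.ofFn s) hne
      have hx0 : ((List.ofFn s).map (X ·)).prod ≠ 0 := by
        rw [hc]
        exact smul_ne_zero c.ne_zero (X.ne_zero _)
      have hmem : ((List.ofFn s).map (X ·)).prod ∈ Pspan F (X ·) m s := by
        refine Submodule.subset_span ⟨Equiv.refl _, ?_⟩
        rw [List.map_ofFn]
        rfl
      have hbot : Pspan F (X ·) m s ≠ ⊥ := by
        intro h
        rw [h, Submodule.mem_bot] at hmem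
        exact hx0 hmem
      have : Module.finrank F (Pspan F (X ·) m s) ≠ 0 := by
        rw [ne_eq, Submodule.finrank_eq_zero]
        exact hbot
      omega
    calc Module.finrank F (Dspan F (X ·) ι m s) ≤ Fintype.card T := h2
      _ = Fintype.card T * 1 := (mul_one _).symm
      _ ≤ Fintype.card T * Module.finrank F (Pspan F (X ·) m s) :=
          Nat.mul_le_mul_left _ h1
end

section
/- Let F be a field of characteristic zero, T a finite group, σ : T × T → Fˣ a 2-cocycle, A a twisted group algebra F^σT with basis (X_u)_{u∈T}, τ : T → T an anti-automorphism with τ∘τ = id, μ : T → Fˣ, and ι : A → A the F-linear involution with ι(X_u) = μ(u) • X_{τ(u)}. For m ≥ 1 and s : Fin m → T, let D_s ⊆ A be the span of { ι^{j(1)}(X_{s(π(1))})·⋯·ι^{j(m)}(X_{s(π(m))}) : π a permutation of Fin m, j : Fin m → {0,1} } (where ι^0 = id, ι^1 = ι). Then for every m: |T|^m ≤ Σ_{s : Fin m → T} dim D_s ≤ |[T,T]| · |T|^{m+1}, where [T,T] is the commutator subgroup of T. -/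
lemma prod_map_eq_smul {F : Type*} [Field F]
    {T : Type*} [Group T]
    {A : Type*} [Ring A] [Algebra F A]
    (σ : T → T → Fˣ) (X : T → A)
    (hX : ∀ u v : T, X u * X v = (σ u v : F) • X (u * v)) :
    ∀ (l : List T) (t : T), ∃ c : Fˣ, X t * (l.map X).prod = (c : F) • X (t * l.prod) := by
  intro l
  induction l with
  | nil => intro t; exact ⟨1, by simp⟩
  | cons a l ih =>
      intro t
      obtain ⟨c, hc⟩ := ih (t * a)
      refine ⟨σ t a * c, ?_⟩
      simp only [List.map_cons, List.prod_cons, ← mul_assoc, hX t a]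
      rw [smul_mul_assoc, hc, smul_smul, mul_assoc]
      push_cast
      ring_nf

/-- The graded-involution codimension sequence of a twisted group algebra with
a homogeneous involution satisfies |T|^m ≤ c_m^{T,ι} ≤ |[T,T]| · |T|^{m+1}. -/
theorem graded_involution_codim_estimates {F : Type*} [Field F] [CharZero F]
    {T : Type*} [Group T] [Fintype T]
    {A : Type*} [Ring A] [Algebra F A]
    (σ : T → T → Fˣ)
    (hσ : ∀ u v w : T, σ u v * σ (u * v) w = σ u (v * w) * σ v w)
    (X : Module.Basis T F A)
    (hX : ∀ u v : T, X u * X v = (σ u v : F) • X (u * v))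
    (τ : T → T) (hτanti : ∀ u v : T, τ (u * v) = τ v * τ u)
    (hτ2 : τ ∘ τ = id)
    (μ : T → Fˣ)
    (ι : A →ₗ[F] A)
    (hι : ∀ u : T, ι (X u) = (μ u : F) • X (τ u))
    (hanti : ∀ x y : A, ι (x * y) = ι y * ι x)
    (hinv : ∀ x : A, ι (ι x) = x)
    (m : ℕ) (hm : 1 ≤ m) :
    Fintype.card T ^ m ≤
        (∑ s : Fin m → T, Module.finrank F (Dspan F (X ·) ι m s)) ∧
      (∑ s : Fin m → T, Module.finrank F (Dspan F (X ·) ι m s)) ≤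
        Nat.card (commutator T) * Fintype.card T ^ (m + 1) := by
  haveI : Module.Finite F A := Module.Finite.of_basis X
  constructor
  · -- lower bound: each D_s is nontrivial
    have key : ∀ s : Fin m → T, 1 ≤ Module.finrank F (Dspan F (X ·) ι m s) := by
      intro s
      -- the identity-permutation, all-false product lies in D_s and is nonzero
      have hmem : (List.ofFn fun i : Fin m => X (s i)).prod ∈ Dspan F (X ·) ι m s := by
        apply Submodule.subset_span
        refine ⟨Equiv.refl _, fun _ => false, ?_⟩
        simp
      have hne : (List.ofFn fun i : Fin m => X (s i)).prod ≠ 0 := by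
        have h0 : 0 < m := hm
        obtain ⟨n, rfl⟩ : ∃ n, m = n + 1 := ⟨m - 1, (Nat.succ_pred_eq_of_pos h0).symm⟩
        have : (List.ofFn fun i : Fin (n + 1) => X (s i)) =
            X (s 0) :: ((List.ofFn fun i : Fin n => s i.succ).map X) := by
          rw [List.ofFn_succ]
          rw [List.map_ofFn]; rfl
        rw [this, List.prod_cons]
        obtain ⟨c, hc⟩ := prod_map_eq_smul σ (X ·) hX (List.ofFn fun i : Fin n => s i.succ) (s 0)
        rw [hc]
        exact smul_ne_zero (Units.ne_zero c) (X.ne_zero _)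
      have : Nontrivial (Dspan F (X ·) ι m s) := by
        refine ⟨⟨⟨_, hmem⟩, 0, ?_⟩⟩
        simp only [ne_eq, Submodule.mk_eq_zero]
        exact hne
      have hpos : 0 < Module.finrank F (Dspan F (X ·) ι m s) :=
        Module.finrank_pos
      exact hpos
    calc Fintype.card T ^ m = ∑ _s : Fin m → T, 1 := by
          simp [Fintype.card_fun]
      _ ≤ ∑ s : Fin m → T, Module.finrank F (Dspan F (X ·) ι m s) :=
          Finset.sum_le_sum fun s _ => key s
  · -- upper bound: each D_s has dimension at most dim A = |T|
    have key : ∀ s : Fin m → T,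
        Module.finrank F (Dspan F (X ·) ι m s) ≤ Fintype.card T := by
      intro s
      calc Module.finrank F (Dspan F (X ·) ι m s) ≤ Module.finrank F A :=
            Submodule.finrank_le _
        _ = Fintype.card T := Module.finrank_eq_card_basis X
    calc (∑ s : Fin m → T, Module.finrank F (Dspan F (X ·) ι m s))
        ≤ ∑ _s : Fin m → T, Fintype.card T := Finset.sum_le_sum fun s _ => key s
      _ = Fintype.card T ^ (m + 1) := by
          simp [Fintype.card_fun, pow_succ]
      _ ≤ Nat.card (commutator T) * Fintype.card T ^ (m + 1) :=
          Nat.le_mul_of_pos_left _ Nat.card_pos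
end

section
/- Let F be a field of characteristic zero, T a finite abelian group, σ : T × T → Fˣ a 2-cocycle, A a twisted group algebra F^σT with basis (X_u)_{u∈T}, μ : T → Fˣ, and ι : A → A an F-linear involution with ι(X_u) = μ(u) • X_u for all u ∈ T (a degree-preserving involution). For m ≥ 1 and s : Fin m → T, let P_s ⊆ A be the span of { X_{s(π(1))}·⋯·X_{s(π(m))} : π a permutation of Fin m } and D_s ⊆ A the span of { ι^{j(1)}(X_{s(π(1))})·⋯·ι^{j(m)}(X_{s(π(m))}) : π a permutation of Fin m, j : Fin m → {0,1} } (ι^0 = id, ι^1 = ι). Then for every m: Σ_{s : Fin m → T} dim D_s = Σ_{s : Fin m → T} dim P_s = |T|^m. -/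
/-- For a finite abelian group T and a degree-preserving involution ι on the
twisted group algebra F^σT, the graded-involution codimension equals the graded
codimension and both equal |T|^m. -/
theorem abelian_codim_exact {F : Type*} [Field F] [CharZero F]
    {T : Type*} [CommGroup T] [Fintype T]
    {A : Type*} [Ring A] [Algebra F A]
    (σ : T → T → Fˣ)
    (hσ : ∀ u v w : T, σ u v * σ (u * v) w = σ u (v * w) * σ v w)
    (X : Module.Basis T F A)
    (hX : ∀ u v : T, X u * X v = (σ u v : F) • X (u * v))
    (μ : T → Fˣ)
    (ι : A →ₗ[F] A)
    (hι : ∀ u : T, ι (X u) = (μ u : F) • X u)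
    (hanti : ∀ x y : A, ι (x * y) = ι y * ι x)
    (hinv : ∀ x : A, ι (ι x) = x)
    (m : ℕ) (hm : 1 ≤ m) :
    (∑ s : Fin m → T, Module.finrank F (Dspan F (X ·) ι m s)) =
        (∑ s : Fin m → T, Module.finrank F (Pspan F (X ·) m s)) ∧
      (∑ s : Fin m → T, Module.finrank F (Pspan F (X ·) m s)) =
        Fintype.card T ^ m := by
  classical
  -- Key lemma: a product of scalar multiples of basis vectors is a unit multiple
  -- of the basis vector of the product.
  have key : ∀ (l : List (Fˣ × T)), l ≠ [] →
      ∃ c : Fˣ, (l.map fun p => (p.1 : F) • X p.2).prod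
        = (c : F) • X ((l.map Prod.snd).prod) := by
    intro l hl
    induction l with
    | nil => exact absurd rfl hl
    | cons p l ih =>
      cases l with
      | nil => exact ⟨p.1, by simp⟩
      | cons q l' =>
        obtain ⟨c, hc⟩ := ih (by simp)
        refine ⟨p.1 * c * σ p.2 (((q :: l').map Prod.snd).prod), ?_⟩
        simp only [List.map_cons, List.prod_cons] at hc ⊢
        rw [hc, smul_mul_assoc, mul_smul_comm, hX, smul_smul, smul_smul]
        congr 1
  have hne : ∀ f : Fin m → (Fˣ × T), List.ofFn f ≠ [] := by
    intro f h
    have := congrArg List.length h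
    simp only [List.length_ofFn, List.length_nil] at this
    omega
  -- Each Pspan is the line spanned by X (∏ i, s i).
  have hP : ∀ s : Fin m → T,
      Pspan F (X ·) m s = Submodule.span F {X (∏ i, s i)} := by
    intro s
    apply le_antisymm
    · rw [Pspan, Submodule.span_le]
      rintro a ⟨π, rfl⟩
      obtain ⟨c, hc⟩ := key (List.ofFn fun i => ((1 : Fˣ), s (π i))) (hne _)
      simp only [List.map_ofFn] at hc
      have h1 : ((fun p : Fˣ × T => (p.1 : F) • X p.2) ∘
          fun i => ((1 : Fˣ), s (π i))) = fun i => X (s (π i)) := by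
        funext i; simp
      have h2 : (List.ofFn (Prod.snd ∘ fun i => ((1 : Fˣ), s (π i)))).prod
          = ∏ i, s i := by
        simp only [Function.comp_def]
        rw [List.prod_ofFn]
        exact Equiv.prod_comp π s
      rw [h1, h2] at hc
      rw [hc]
      exact Submodule.smul_mem _ _ (Submodule.mem_span_singleton_self _)
    · rw [Submodule.span_le]
      rintro a rfl
      obtain ⟨c, hc⟩ := key (List.ofFn fun i => ((1 : Fˣ), s i)) (hne _)
      simp only [List.map_ofFn] at hc
      have h1 : ((fun p : Fˣ × T => (p.1 : F) • X p.2) ∘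
          fun i => ((1 : Fˣ), s i)) = fun i => X (s i) := by
        funext i; simp
      have h2 : (List.ofFn (Prod.snd ∘ fun i => ((1 : Fˣ), s i))).prod
          = ∏ i, s i := by
        simp only [Function.comp_def]
        rw [List.prod_ofFn]
      rw [h1, h2] at hc
      have hmem : (List.ofFn fun i => X (s i)).prod ∈ Pspan F (X ·) m s :=
        Submodule.subset_span ⟨Equiv.refl _, by simp⟩
      have : X (∏ i, s i) = ((c⁻¹ : Fˣ) : F) • (List.ofFn fun i => X (s i)).prod := by
        rw [hc, smul_smul]
        simp
      rw [this]
      exact Submodule.smul_mem _ _ hmem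
  -- Each Dspan is the same line.
  have hD : ∀ s : Fin m → T,
      Dspan F (X ·) ι m s = Submodule.span F {X (∏ i, s i)} := by
    intro s
    apply le_antisymm
    · rw [Dspan, Submodule.span_le]
      rintro a ⟨π, j, rfl⟩
      obtain ⟨c, hc⟩ := key
        (List.ofFn fun i => ((if j i then μ (s (π i)) else 1), s (π i))) (hne _)
      simp only [List.map_ofFn] at hc
      have h1 : ((fun p : Fˣ × T => (p.1 : F) • X p.2) ∘
          fun i => ((if j i then μ (s (π i)) else 1), s (π i)))
          = fun i => if j i then ι (X (s (π i))) else X (s (π i)) := by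
        funext i
        by_cases h : j i <;> simp [h, hι]
      have h2 : (List.ofFn (Prod.snd ∘
          fun i => ((if j i then μ (s (π i)) else 1 : Fˣ), s (π i)))).prod
          = ∏ i, s i := by
        simp only [Function.comp_def]
        rw [List.prod_ofFn]
        exact Equiv.prod_comp π s
      rw [h1, h2] at hc
      rw [hc]
      exact Submodule.smul_mem _ _ (Submodule.mem_span_singleton_self _)
    · rw [Submodule.span_le]
      rintro a rfl
      obtain ⟨c, hc⟩ := key (List.ofFn fun i => ((1 : Fˣ), s i)) (hne _)
      simp only [List.map_ofFn] at hc
      have h1 : ((fun p : Fˣ × T => (p.1 : F) • X p.2) ∘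
          fun i => ((1 : Fˣ), s i)) = fun i => X (s i) := by
        funext i; simp
      have h2 : (List.ofFn (Prod.snd ∘ fun i => ((1 : Fˣ), s i))).prod
          = ∏ i, s i := by
        simp only [Function.comp_def]
        rw [List.prod_ofFn]
      rw [h1, h2] at hc
      have hmem : (List.ofFn fun i => X (s i)).prod ∈ Dspan F (X ·) ι m s :=
        Submodule.subset_span ⟨Equiv.refl _, fun _ => false, by simp⟩
      have : X (∏ i, s i) = ((c⁻¹ : Fˣ) : F) • (List.ofFn fun i => X (s i)).prod := by
        rw [hc, smul_smul]
        simp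
      rw [this]
      exact Submodule.smul_mem _ _ hmem
  have hrank : ∀ s : Fin m → T,
      Module.finrank F (Submodule.span F {X (∏ i, s i)}) = 1 :=
    fun s => finrank_span_singleton (X.ne_zero _)
  have hPsum : (∑ s : Fin m → T, Module.finrank F (Pspan F (X ·) m s))
      = Fintype.card T ^ m := by
    calc (∑ s : Fin m → T, Module.finrank F (Pspan F (X ·) m s))
        = ∑ _s : Fin m → T, 1 := by
          apply Finset.sum_congr rfl
          intro s _
          rw [hP s, hrank s]
      _ = Fintype.card T ^ m := by
          simp [Fintype.card_fun]
  refine ⟨?_, hPsum⟩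
  apply Finset.sum_congr rfl
  intro s _
  rw [hP s, hD s]
end
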